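/- arXiv:2105.10439 — 4 statements merged into one kernel-verified Lean document; each statement's English description precedes it below -/
import Mathlib

section
/- Let Σ be a symmetric positive definite D×D real matrix partitioned into blocks [[X, Y],[Y^T, Z_t]] where Z_t = Z_0 + diag{α_t} with α_t a vector of positive reals each tending to +∞ as t → ∞. Then the inverse Σ_t^{-1} (with Z replaced by Z_t) converges entrywise to the block matrix [[X^{-1}, 0],[0, 0]]. -/
open Matrix Filter

private lemma aux_entry_bound {n : ℕ} (S : Matrix (Fin n) (Fin n) ℝ) [Invertible S] {c : ℝ}
    (hc : 0 < c) (h : ∀ y : Fin n → ℝ, c * (∑ k, y k ^ 2) ≤ y ⬝ᵥ S *ᵥ y) (i j : Fin n) :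
    |S⁻¹ i j| ≤ 1 / c := by
  set v : Fin n → ℝ := S⁻¹ *ᵥ Pi.single j 1 with hv
  have hSv : S *ᵥ v = Pi.single j 1 := by
    rw [hv, mulVec_mulVec, Matrix.mul_nonsing_inv S (isUnit_det_of_invertible S), one_mulVec]
  have h1 : v ⬝ᵥ S *ᵥ v = v j := by rw [hSv, dotProduct_single, mul_one]
  have h2 : S⁻¹ i j = v i := by simp [hv, mulVec_single]
  set T := ∑ k, v k ^ 2 with hT
  have hT0 : 0 ≤ T := Finset.sum_nonneg fun k _ => sq_nonneg _
  have hcT : c * T ≤ v j := h1 ▸ h v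
  have hvj2 : v j ^ 2 ≤ T := Finset.single_le_sum (fun k _ => sq_nonneg (v k)) (Finset.mem_univ j)
  have hc2 : (0:ℝ) < c ^ 2 := by positivity
  have hkey : c ^ 2 * T ^ 2 ≤ T := by
    nlinarith [pow_le_pow_left₀ (mul_nonneg hc.le hT0) hcT 2]
  have hTle : T ≤ (1 / c) ^ 2 := by
    rcases hT0.eq_or_lt with h0 | h0
    · rw [← h0]; positivity
    · rw [div_pow, one_pow, le_div_iff₀ hc2]
      nlinarith
  have hvi2 : v i ^ 2 ≤ (1 / c) ^ 2 :=
    le_trans (Finset.single_le_sum (fun k _ => sq_nonneg (v k)) (Finset.mem_univ i)) hTle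
  have := Real.sqrt_le_sqrt hvi2
  rw [Real.sqrt_sq_eq_abs, Real.sqrt_sq (by positivity : (0:ℝ) ≤ 1 / c)] at this
  rw [h2]
  exact this

private lemma aux_mul_tendsto {a b n : Type*} [Fintype n]
    (A : Matrix a n ℝ) (B : Matrix n b ℝ) (P : ℕ → Matrix n n ℝ)
    (h : ∀ k l, Tendsto (fun t => P t k l) atTop (nhds 0)) (i : a) (j : b) :
    Tendsto (fun t => (A * P t * B) i j) atTop (nhds 0) := by
  have heq : ∀ t, (A * P t * B) i j = ∑ l, (∑ k, A i k * P t k l) * B l j := by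
    intro t; simp [Matrix.mul_apply]
  simp only [heq]
  have : Tendsto (fun t => ∑ l : n, (∑ k : n, A i k * P t k l) * B l j) atTop
      (nhds (∑ l : n, (∑ k : n, A i k * 0) * B l j)) := by
    refine tendsto_finset_sum _ fun l _ => Tendsto.mul_const _ ?_
    exact tendsto_finset_sum _ fun k _ => Tendsto.const_mul _ (h k l)
  simpa using this

/-- **Limit of the SBL covariance under diverging precisions.**  For a symmetric positive
definite block matrix `[[X, Y], [Yᵀ, Z₀ + diag α_t]]` whose bottom-right diagonal precisions
`α_t` all tend to `+∞`, the inverse converges entrywise to `[[X⁻¹, 0], [0, 0]]`. -/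
theorem blockMatrix_inverse_limit {s u : ℕ}
    (X : Matrix (Fin s) (Fin s) ℝ) (hX : X.PosDef)
    (Y : Matrix (Fin s) (Fin u) ℝ)
    (Z₀ : Matrix (Fin u) (Fin u) ℝ) (hZ₀ : Z₀.PosSemidef)
    (α : ℕ → Fin u → ℝ) (hαpos : ∀ t i, 0 < α t i)
    (hα : ∀ i, Tendsto (fun t => α t i) atTop atTop)
    (hPD : ∀ t, (Matrix.fromBlocks X Y Yᵀ (Z₀ + Matrix.diagonal (α t))).PosDef) :
    ∀ i j : Fin s ⊕ Fin u,
      Tendsto (fun t => (Matrix.fromBlocks X Y Yᵀ (Z₀ + Matrix.diagonal (α t)))⁻¹ i j)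
        atTop (nhds ((Matrix.fromBlocks X⁻¹ 0 0 0) i j)) := by
  haveI : Invertible X := hX.isUnit.invertible
  have hX1 : X * X⁻¹ = 1 := Matrix.mul_nonsing_inv X (isUnit_det_of_invertible X)
  set S : ℕ → Matrix (Fin u) (Fin u) ℝ :=
    fun t => Z₀ + Matrix.diagonal (α t) - Yᵀ * X⁻¹ * Y with hSdef
  have hYt : Yᵀ = Yᴴ := (conjTranspose_eq_transpose_of_trivial Y).symm
  have hSPD : ∀ t, (S t).PosDef := by
    intro t
    refine posDef_iff_dotProduct_mulVec.mpr ⟨?_, ?_⟩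
    · refine ((hZ₀.1.add (isHermitian_diagonal _)).sub ?_)
      rw [hYt]
      exact isHermitian_conjTranspose_mul_mul Y hX.1.inv
    · intro y hy
      have hx : (Sum.elim (-((X⁻¹ * Y) *ᵥ y)) y) ≠ 0 := by
        intro hc
        exact hy (funext fun k => congrFun hc (Sum.inr k))
      have hq := (hPD t).dotProduct_mulVec_pos hx
      rw [dotProduct_mulVec, hYt,
        schur_complement_eq₁₁ Y (Z₀ + Matrix.diagonal (α t)) _ _ hX.1] at hq
      rw [← hYt] at hq
      simp only [star_trivial, neg_add_cancel, star_zero, zero_vecMul, zero_dotProduct,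
        zero_add] at hq
      rw [star_trivial, dotProduct_mulVec]
      exact hq
  haveI : ∀ t, Invertible (S t) := fun t => ((hSPD t).isUnit).invertible
  have hS1 : ∀ t, S t * (S t)⁻¹ = 1 :=
    fun t => Matrix.mul_nonsing_inv _ (isUnit_det_of_invertible _)
  have hkey : ∀ t, Yᵀ * X⁻¹ * Y = (Z₀ + Matrix.diagonal (α t)) - S t := by
    intro t
    exact (sub_sub_cancel (Z₀ + Matrix.diagonal (α t)) (Yᵀ * X⁻¹ * Y)).symm
  -- the block inversion formula, verified by direct multiplication
  have hinv : ∀ t, (Matrix.fromBlocks X Y Yᵀ (Z₀ + Matrix.diagonal (α t)))⁻¹ =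
      Matrix.fromBlocks (X⁻¹ + X⁻¹ * Y * (S t)⁻¹ * Yᵀ * X⁻¹) (-(X⁻¹ * Y * (S t)⁻¹))
        (-((S t)⁻¹ * Yᵀ * X⁻¹)) ((S t)⁻¹) := by
    intro t
    apply Matrix.inv_eq_right_inv
    have e11 : X * (X⁻¹ + X⁻¹ * Y * (S t)⁻¹ * Yᵀ * X⁻¹) + Y * -((S t)⁻¹ * Yᵀ * X⁻¹) = 1 := by
      rw [Matrix.mul_add, Matrix.mul_neg]
      simp only [← Matrix.mul_assoc]
      rw [hX1, Matrix.one_mul]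
      abel
    have e12 : X * -(X⁻¹ * Y * (S t)⁻¹) + Y * (S t)⁻¹ = 0 := by
      rw [Matrix.mul_neg]
      simp only [← Matrix.mul_assoc]
      rw [hX1, Matrix.one_mul]
      abel
    have e21 : Yᵀ * (X⁻¹ + X⁻¹ * Y * (S t)⁻¹ * Yᵀ * X⁻¹) +
        (Z₀ + Matrix.diagonal (α t)) * -((S t)⁻¹ * Yᵀ * X⁻¹) = 0 := by
      rw [Matrix.mul_add, Matrix.mul_neg]
      simp only [← Matrix.mul_assoc]
      rw [hkey t]
      simp only [Matrix.sub_mul, hS1 t, Matrix.one_mul]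
      abel
    have e22 : Yᵀ * -(X⁻¹ * Y * (S t)⁻¹) + (Z₀ + Matrix.diagonal (α t)) * (S t)⁻¹ = 1 := by
      rw [Matrix.mul_neg]
      simp only [← Matrix.mul_assoc]
      rw [hkey t]
      simp only [Matrix.sub_mul, hS1 t, Matrix.one_mul]
      abel
    rw [fromBlocks_multiply, e11, e12, e21, e22, fromBlocks_one]
  -- entries of (S t)⁻¹ tend to 0
  have hS0 : ∀ k l : Fin u, Tendsto (fun t => (S t)⁻¹ k l) atTop (nhds 0) := by
    intro k l
    haveI : Nonempty (Fin u) := ⟨k⟩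
    set M : Matrix (Fin u) (Fin u) ℝ := Z₀ - Yᵀ * X⁻¹ * Y with hM
    set K : ℝ := ∑ i, ∑ j, |M i j| with hK
    have hK0 : 0 ≤ K := Finset.sum_nonneg fun i _ => Finset.sum_nonneg fun j _ => abs_nonneg _
    set m : ℕ → ℝ := fun t => Finset.univ.inf' Finset.univ_nonempty (α t) with hm
    have hmT : Tendsto m atTop atTop := by
      rw [tendsto_atTop]
      intro b
      have h1 : ∀ i : Fin u, ∀ᶠ t in atTop, b ≤ α t i := fun i => (hα i).eventually_ge_atTop b
      filter_upwards [eventually_all.2 h1] with t ht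
      exact Finset.le_inf' _ _ fun i _ => ht i
    have hcT : Tendsto (fun t => m t - K) atTop atTop := by
      simpa [sub_eq_add_neg] using tendsto_atTop_add_const_right atTop (-K) hmT
    have hquad : ∀ t, ∀ y : Fin u → ℝ, (m t - K) * (∑ i, y i ^ 2) ≤ y ⬝ᵥ (S t) *ᵥ y := by
      intro t y
      have hST : S t = M + Matrix.diagonal (α t) := by
        rw [hSdef, hM]; abel
      set T := ∑ i, y i ^ 2 with hT
      have hT0 : 0 ≤ T := Finset.sum_nonneg fun i _ => sq_nonneg _
      have hyT : ∀ i, y i ^ 2 ≤ T := fun i =>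
        Finset.single_le_sum (fun c _ => sq_nonneg (y c)) (Finset.mem_univ i)
      have hMy : -(K * T) ≤ y ⬝ᵥ M *ᵥ y := by
        have hexp : y ⬝ᵥ M *ᵥ y = ∑ i, ∑ j, y i * (M i j * y j) := by
          simp [dotProduct, mulVec, Finset.mul_sum]
        have habs : |y ⬝ᵥ M *ᵥ y| ≤ K * T := by
          rw [hexp, hK, Finset.sum_mul]
          refine (Finset.abs_sum_le_sum_abs _ _).trans (Finset.sum_le_sum fun i _ => ?_)
          rw [Finset.sum_mul]
          refine (Finset.abs_sum_le_sum_abs _ _).trans (Finset.sum_le_sum fun jj _ => ?_)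
          have h1 : |y i * (M i jj * y jj)| = |M i jj| * |y i * y jj| := by
            rw [abs_mul, abs_mul, abs_mul]; ring
          rw [h1]
          refine mul_le_mul_of_nonneg_left ?_ (abs_nonneg _)
          rw [abs_mul]
          nlinarith [hyT i, hyT jj, abs_nonneg (y i), abs_nonneg (y jj), sq_abs (y i),
            sq_abs (y jj), sq_nonneg (|y i| - |y jj|)]
        linarith [neg_abs_le (y ⬝ᵥ M *ᵥ y)]
      have hDy : m t * T ≤ y ⬝ᵥ (Matrix.diagonal (α t)) *ᵥ y := by
        have hexp : y ⬝ᵥ (Matrix.diagonal (α t)) *ᵥ y = ∑ i, α t i * y i ^ 2 := by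
          simp [dotProduct, mulVec_diagonal, sq]
          exact Finset.sum_congr rfl fun i _ => by ring
        rw [hexp, hT, Finset.mul_sum]
        refine Finset.sum_le_sum fun i _ => ?_
        exact mul_le_mul_of_nonneg_right (Finset.inf'_le _ (Finset.mem_univ i)) (sq_nonneg _)
      rw [hST, Matrix.add_mulVec, dotProduct_add]
      nlinarith
    have hbound : ∀ᶠ t in atTop, |(S t)⁻¹ k l| ≤ 1 / (m t - K) := by
      filter_upwards [hcT.eventually_gt_atTop 0] with t ht
      exact aux_entry_bound (S t) ht (hquad t) k l
    have hlim : Tendsto (fun t => 1 / (m t - K)) atTop (nhds 0) := by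
      simpa [one_div, Pi.inv_def] using hcT.inv_tendsto_atTop
    exact squeeze_zero_norm' (by simpa [Real.norm_eq_abs] using hbound) hlim
  intro i j
  simp only [hinv]
  cases i <;> cases j
  case inl.inl i j =>
    simp only [fromBlocks_apply₁₁, Matrix.add_apply]
    have h0 := aux_mul_tendsto (X⁻¹ * Y) (Yᵀ * X⁻¹) (fun t => (S t)⁻¹) hS0 i j
    have := h0.const_add (X⁻¹ i j)
    simp only [add_zero] at this
    refine this.congr fun t => ?_
    simp only [Matrix.mul_assoc]
  case inl.inr i j =>
    simp only [fromBlocks_apply₁₂, Matrix.neg_apply, Matrix.zero_apply]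
    have h0 := aux_mul_tendsto (X⁻¹ * Y) (1 : Matrix (Fin u) (Fin u) ℝ) (fun t => (S t)⁻¹) hS0 i j
    simp only [Matrix.mul_one] at h0
    have := h0.neg
    simp only [neg_zero] at this
    refine this.congr fun t => ?_
    simp only [Matrix.mul_assoc]
  case inr.inl i j =>
    simp only [fromBlocks_apply₂₁, Matrix.neg_apply, Matrix.zero_apply]
    have h0 := aux_mul_tendsto (1 : Matrix (Fin u) (Fin u) ℝ) (Yᵀ * X⁻¹) (fun t => (S t)⁻¹) hS0 i j
    simp only [Matrix.one_mul] at h0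
    have := h0.neg
    simp only [neg_zero] at this
    refine this.congr fun t => ?_
    simp only [Matrix.mul_assoc]
  case inr.inr i j =>
    simpa only [fromBlocks_apply₂₂, Matrix.zero_apply] using hS0 i j
end

section
/- Let Σ̂ be a symmetric positive definite matrix on index set S with Σ̂^{-1} = β Φ_S^T Φ_S + diag{α̂_S}, where β > 0, α̂_S has positive entries, and σ_min(Φ_S) > 0. Then for any j ∈ S and any diagonal matrix Θ with positive entries, sqrt(Σ_{j'≠j} Σ̂_{j,j'}^2) ≤ ‖Θ^{-1} Φ_S^T Φ_S - I‖_2 / (β σ_min(Φ_S)^2), where ‖·‖_2 is the spectral norm. -/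
open Matrix

/-- The spectral norm (largest singular value) of a square real matrix. -/
noncomputable def specNorm {n : Type*} [Fintype n] [DecidableEq n]
    (A : Matrix n n ℝ) : ℝ :=
  ‖(Matrix.toEuclideanCLM (𝕜 := ℝ) (n := n) A :
      EuclideanSpace ℝ n →L[ℝ] EuclideanSpace ℝ n)‖

set_option linter.unusedSectionVars false
set_option synthInstance.maxHeartbeats 400000

section aux
variable {n : Type*} [Fintype n] [DecidableEq n]

lemma euclid_norm_sq (x : EuclideanSpace ℝ n) : ‖x‖ ^ 2 = ∑ i, (x i) ^ 2 := by
  rw [EuclideanSpace.norm_eq, Real.sq_sqrt (by positivity)]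
  simp [Real.norm_eq_abs, sq_abs]

lemma clm_apply (A : Matrix n n ℝ) (x : EuclideanSpace ℝ n) (i : n) :
    (toEuclideanCLM (𝕜 := ℝ) A x) i = A.mulVec (fun k => x k) i := rfl

lemma specNorm_nonneg (A : Matrix n n ℝ) : 0 ≤ specNorm A := norm_nonneg _

lemma specNorm_mul_le (A B : Matrix n n ℝ) :
    specNorm (A * B) ≤ specNorm A * specNorm B := by
  unfold specNorm; rw [_root_.map_mul]; exact norm_mul_le _ _

lemma specNorm_smul (c : ℝ) (A : Matrix n n ℝ) :
    specNorm (c • A) = |c| * specNorm A := by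
  unfold specNorm
  rw [_root_.map_smul]
  rw [norm_smul (β := EuclideanSpace ℝ n →L[ℝ] EuclideanSpace ℝ n) c (toEuclideanCLM (𝕜 := ℝ) A), Real.norm_eq_abs]

lemma specNorm_le_of_bound (A : Matrix n n ℝ) (c : ℝ) (hc : 0 ≤ c)
    (h : ∀ v : n → ℝ, ∑ i, (A.mulVec v i) ^ 2 ≤ c ^ 2 * ∑ i, (v i) ^ 2) :
    specNorm A ≤ c := by
  refine ContinuousLinearMap.opNorm_le_bound _ hc fun x => ?_
  have h1 : ‖toEuclideanCLM (𝕜 := ℝ) A x‖ ^ 2 ≤ (c * ‖x‖) ^ 2 := by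
    rw [euclid_norm_sq]
    calc ∑ i, ((toEuclideanCLM (𝕜 := ℝ) A x) i) ^ 2
        = ∑ i, (A.mulVec (fun k => x k) i) ^ 2 := by simp [clm_apply]
      _ ≤ c ^ 2 * ∑ i, (x i) ^ 2 := h _
      _ = (c * ‖x‖) ^ 2 := by rw [mul_pow, euclid_norm_sq]
  exact le_of_pow_le_pow_left₀ two_ne_zero (mul_nonneg hc (norm_nonneg _)) h1

lemma sum_sq_mulVec_le (A : Matrix n n ℝ) (v : n → ℝ) :
    ∑ i, (A.mulVec v i) ^ 2 ≤ specNorm A ^ 2 * ∑ i, (v i) ^ 2 := by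
  set x : EuclideanSpace ℝ n := (WithLp.equiv 2 _).symm v with hxdef
  have hx : ∀ i, x i = v i := fun i => rfl
  have h := (toEuclideanCLM (𝕜 := ℝ) A).le_opNorm x
  have h2 := pow_le_pow_left₀ (norm_nonneg _) h 2
  rw [euclid_norm_sq, mul_pow, euclid_norm_sq] at h2
  calc ∑ i, (A.mulVec v i) ^ 2
      = ∑ i, ((toEuclideanCLM (𝕜 := ℝ) A x) i) ^ 2 := by
        simp only [clm_apply]
        exact Finset.sum_congr rfl fun i _ => by rw [show (fun k => x k) = v from funext hx]
    _ ≤ specNorm A ^ 2 * ∑ i, (x i) ^ 2 := h2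
    _ = specNorm A ^ 2 * ∑ i, (v i) ^ 2 := by simp [hx]

lemma specNorm_diagonal_le (d : n → ℝ) (c : ℝ) (hc : 0 ≤ c) (h : ∀ i, |d i| ≤ c) :
    specNorm (Matrix.diagonal d) ≤ c := by
  refine specNorm_le_of_bound _ c hc fun v => ?_
  rw [Finset.mul_sum]
  refine Finset.sum_le_sum fun i _ => ?_
  rw [mulVec_diagonal, mul_pow]
  have : d i ^ 2 ≤ c ^ 2 := by
    rw [← sq_abs (d i)]; exact pow_le_pow_left₀ (abs_nonneg _) (h i) 2
  exact mul_le_mul_of_nonneg_right this (sq_nonneg _)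

end aux

/-- **Limiting variance bound for the SBL posterior covariance (Theorem 1, `K = 1`).**
Let `Σ̂ = (β ΦᵀΦ + diag α̂)⁻¹` with `β > 0`, `α̂` positive, and smallest singular value
of `Φ` at least `σ > 0`.  Then for any `j` and any diagonal matrix `Θ = diag θ` with
positive entries, `√(∑_{j'≠j} Σ̂_{j,j'}²) ≤ ‖Θ⁻¹ ΦᵀΦ - I‖₂ / (β σ²)`. -/
theorem sbl_offdiag_row_norm_bound {N m : ℕ}
    (Φ : Matrix (Fin N) (Fin m) ℝ) (σ : ℝ) (hσ : 0 < σ)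
    (hσmin : ∀ v : Fin m → ℝ, σ ^ 2 * (∑ j, (v j) ^ 2) ≤ ∑ i, (Φ.mulVec v i) ^ 2)
    (β : ℝ) (hβ : 0 < β) (α : Fin m → ℝ) (hα : ∀ j, 0 < α j)
    (Sig : Matrix (Fin m) (Fin m) ℝ)
    (hSig : Sig = (β • (Φᵀ * Φ) + Matrix.diagonal α)⁻¹)
    (θ : Fin m → ℝ) (hθ : ∀ j, 0 < θ j) (j : Fin m) :
    Real.sqrt (∑ j' ∈ Finset.univ.erase j, (Sig j j') ^ 2) ≤
      specNorm ((Matrix.diagonal θ)⁻¹ * (Φᵀ * Φ) - 1) / (β * σ ^ 2) := by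
  set G : Matrix (Fin m) (Fin m) ℝ := Φᵀ * Φ with hG
  set A : Matrix (Fin m) (Fin m) ℝ := β • G + Matrix.diagonal α with hA
  set Θ : Matrix (Fin m) (Fin m) ℝ := Matrix.diagonal θ with hΘdef
  set E : Matrix (Fin m) (Fin m) ℝ := Θ⁻¹ * G - 1 with hE
  -- quadratic form of A
  have hquad : ∀ w : Fin m → ℝ, w ⬝ᵥ A.mulVec w
      = β * (∑ i, (Φ.mulVec w i) ^ 2) + ∑ i, α i * (w i) ^ 2 := by
    intro w
    rw [hA, add_mulVec, dotProduct_add, smul_mulVec, dotProduct_smul]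
    congr 1
    · rw [hG, ← mulVec_mulVec, dotProduct_mulVec, vecMul_transpose, smul_eq_mul]
      congr 1
      exact Finset.sum_congr rfl fun i _ => (sq (Φ.mulVec w i)).symm
    · simp only [mulVec_diagonal, dotProduct]
      exact Finset.sum_congr rfl fun i _ => by ring
  -- A is invertible
  have hInjA : Function.Injective A.mulVec := by
    intro x y hxy
    have h0 : A.mulVec (x - y) = 0 := by rw [mulVec_sub, hxy, sub_self]
    have h1 : (x - y) ⬝ᵥ A.mulVec (x - y) = 0 := by rw [h0, dotProduct_zero]
    rw [hquad] at h1
    have h2 : σ ^ 2 * (∑ i, ((x - y) i) ^ 2) ≤ ∑ i, (Φ.mulVec (x - y) i) ^ 2 := hσmin _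
    have h3 : 0 ≤ ∑ i, α i * ((x - y) i) ^ 2 :=
      Finset.sum_nonneg fun i _ => mul_nonneg (hα i).le (sq_nonneg _)
    have h4 : 0 ≤ ∑ i, (Φ.mulVec (x - y) i) ^ 2 :=
      Finset.sum_nonneg fun i _ => sq_nonneg _
    have hb : (0:ℝ) < β * σ ^ 2 := by positivity
    have h5 : β * σ ^ 2 * ∑ i, ((x - y) i) ^ 2 ≤ 0 := by
      nlinarith [mul_le_mul_of_nonneg_left h2 hβ.le]
    have h5' : ∑ i, ((x - y) i) ^ 2 ≤ 0 := by nlinarith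
    have h6 : ∑ i, ((x - y) i) ^ 2 = 0 :=
      le_antisymm h5' (Finset.sum_nonneg fun i _ => sq_nonneg _)
    have h7 : ∀ i ∈ Finset.univ, ((x - y) i) ^ 2 = 0 :=
      (Finset.sum_eq_zero_iff_of_nonneg fun i _ => sq_nonneg _).mp h6
    funext i
    have := pow_eq_zero_iff (n := 2) two_ne_zero |>.mp (h7 i (Finset.mem_univ i))
    have : x i - y i = 0 := this
    linarith
  have hdetA : IsUnit A.det :=
    (Matrix.isUnit_iff_isUnit_det A).mp (Matrix.mulVec_injective_iff_isUnit.mp hInjA)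
  have hAS : A * Sig = 1 := by rw [hSig]; exact Matrix.mul_nonsing_inv A hdetA
  -- symmetry
  have hGsymm : Gᵀ = G := by rw [hG, transpose_mul, transpose_transpose]
  have hAsymm : Aᵀ = A := by rw [hA, transpose_add, transpose_smul, hGsymm, diagonal_transpose]
  have hSigsymm : Sigᵀ = Sig := by
    rw [hSig, transpose_nonsing_inv, hAsymm]
  -- Θ invertible
  have hdetΘ : IsUnit Θ.det := by
    rw [hΘdef, det_diagonal]
    exact (Finset.prod_pos fun i _ => hθ i).ne'.isUnit
  have hΘinv : Θ * Θ⁻¹ = 1 := Matrix.mul_nonsing_inv Θ hdetΘ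
  -- Ψ
  set ψ : Fin m → ℝ := fun i => (β * θ i + α i)⁻¹ with hψ
  set Ψ : Matrix (Fin m) (Fin m) ℝ := Matrix.diagonal ψ with hΨ
  set D : Matrix (Fin m) (Fin m) ℝ := Matrix.diagonal (fun i => β * θ i + α i) with hD
  have hdpos : ∀ i, 0 < β * θ i + α i := fun i => add_pos (mul_pos hβ (hθ i)) (hα i)
  have hΨD : Ψ * D = 1 := by
    rw [hΨ, hD, diagonal_mul_diagonal]
    have : (fun i => ψ i * (β * θ i + α i)) = fun _ => (1:ℝ) :=
      funext fun i => inv_mul_cancel₀ (hdpos i).ne'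
    rw [this, Matrix.diagonal_one]
  -- key identity
  set M : Matrix (Fin m) (Fin m) ℝ := Sig - Ψ with hM
  have hkey : M = Ψ * (D - A) * Sig := by
    rw [mul_sub, sub_mul, hΨD, one_mul, mul_assoc, hAS, mul_one, hM]
  have hDA : D - A = (-β) • (G - Θ) := by
    ext i k
    by_cases hik : i = k
    · subst hik
      simp only [hD, hA, hΘdef, Matrix.sub_apply, Matrix.add_apply, Matrix.smul_apply,
        Matrix.diagonal_apply_eq, smul_eq_mul, neg_mul]
      ring
    · simp only [hD, hA, hΘdef, Matrix.sub_apply, Matrix.add_apply, Matrix.smul_apply,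
        Matrix.diagonal_apply_ne _ hik, smul_eq_mul, neg_mul]
      ring
  have hGΘ : G - Θ = Θ * E := by
    rw [hE, mul_sub, ← mul_assoc, hΘinv, one_mul, mul_one]
  have hM2 : M = (-β) • ((Ψ * Θ) * E * Sig) := by
    rw [hkey, hDA, hGΘ, mul_smul_comm, smul_mul_assoc, ← mul_assoc]
  -- norm bounds
  have hPT : specNorm (Ψ * Θ) ≤ 1 / β := by
    rw [hΨ, hΘdef, diagonal_mul_diagonal]
    refine specNorm_diagonal_le _ _ (by positivity) fun i => ?_
    have h1 : 0 < ψ i * θ i := mul_pos (inv_pos.mpr (hdpos i)) (hθ i)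
    rw [abs_of_pos h1, hψ]
    rw [inv_mul_eq_div, div_le_div_iff₀ (hdpos i) hβ]
    have := (hα i).le
    nlinarith [hθ i]
  have hSigN : specNorm Sig ≤ 1 / (β * σ ^ 2) := by
    refine specNorm_le_of_bound _ _ (by positivity) fun v => ?_
    set w : Fin m → ℝ := Sig.mulVec v with hw
    have hv : A.mulVec w = v := by rw [hw, mulVec_mulVec, hAS, one_mulVec]
    have h1 : β * σ ^ 2 * ∑ i, (w i) ^ 2 ≤ w ⬝ᵥ v := by
      rw [← hv, hquad w]
      have h2 := hσmin w
      have h3 : 0 ≤ ∑ i, α i * (w i) ^ 2 :=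
        Finset.sum_nonneg fun i _ => mul_nonneg (hα i).le (sq_nonneg _)
      nlinarith
    have h2 : (w ⬝ᵥ v) ^ 2 ≤ (∑ i, (w i) ^ 2) * (∑ i, (v i) ^ 2) :=
      Finset.sum_mul_sq_le_sq_mul_sq Finset.univ w v
    have hSw : 0 ≤ ∑ i, (w i) ^ 2 := Finset.sum_nonneg fun i _ => sq_nonneg _
    have hSv : 0 ≤ ∑ i, (v i) ^ 2 := Finset.sum_nonneg fun i _ => sq_nonneg _
    have hc : (0:ℝ) < β * σ ^ 2 := by positivity
    have hd : ((β * σ ^ 2) * ∑ i, (w i) ^ 2) ^ 2 ≤ (∑ i, (w i) ^ 2) * (∑ i, (v i) ^ 2) :=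
      le_trans (pow_le_pow_left₀ (by positivity) h1 2) h2
    have h3 : (β * σ ^ 2) ^ 2 * ∑ i, (w i) ^ 2 ≤ ∑ i, (v i) ^ 2 := by
      rcases hSw.eq_or_lt with h | h
      · rw [← h]; simpa using hSv
      · nlinarith
    calc (∑ i, (w i) ^ 2)
        = (1 / (β * σ ^ 2)) ^ 2 * ((β * σ ^ 2) ^ 2 * ∑ i, (w i) ^ 2) := by
          field_simp
      _ ≤ (1 / (β * σ ^ 2)) ^ 2 * ∑ i, (v i) ^ 2 :=
          mul_le_mul_of_nonneg_left h3 (by positivity)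
  -- M spectral norm bound
  have hMnorm : specNorm M ≤ specNorm E / (β * σ ^ 2) := by
    rw [hM2, specNorm_smul, abs_neg, abs_of_pos hβ]
    have s1 : specNorm ((Ψ * Θ) * E * Sig) ≤ specNorm ((Ψ * Θ) * E) * specNorm Sig :=
      specNorm_mul_le _ _
    have s2 : specNorm ((Ψ * Θ) * E) ≤ specNorm (Ψ * Θ) * specNorm E :=
      specNorm_mul_le _ _
    have s3 : specNorm ((Ψ * Θ) * E) * specNorm Sig ≤
        ((1 / β) * specNorm E) * (1 / (β * σ ^ 2)) := by
      refine mul_le_mul (le_trans s2 ?_) hSigN (specNorm_nonneg _)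
        (mul_nonneg (by positivity) (specNorm_nonneg _))
      exact mul_le_mul_of_nonneg_right hPT (specNorm_nonneg _)
    have s4 : specNorm ((Ψ * Θ) * E * Sig) ≤ ((1 / β) * specNorm E) * (1 / (β * σ ^ 2)) :=
      le_trans s1 s3
    calc β * specNorm ((Ψ * Θ) * E * Sig)
        ≤ β * (((1 / β) * specNorm E) * (1 / (β * σ ^ 2))) :=
          mul_le_mul_of_nonneg_left s4 hβ.le
      _ = specNorm E / (β * σ ^ 2) := by field_simp
  -- row norm of M
  have hMT : Mᵀ = M := by rw [hM, transpose_sub, hSigsymm, hΨ, diagonal_transpose]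
  have hMsym : ∀ a b, M a b = M b a := fun a b => by
    have h := congrFun (congrFun hMT a) b
    rw [Matrix.transpose_apply] at h
    exact h.symm
  set e : Fin m → ℝ := Pi.single j 1 with he
  have hMe : ∀ i, M.mulVec e i = M i j := by
    intro i
    simp [he, Matrix.mulVec, dotProduct, Pi.single_apply]
  have hee : ∑ i, (e i) ^ 2 = 1 := by
    simp [he, Pi.single_apply, sq]
  have hrow : ∑ j', (M j' j) ^ 2 ≤ specNorm M ^ 2 := by
    have := sum_sq_mulVec_le M e
    rw [hee, mul_one] at this
    calc ∑ j', (M j' j) ^ 2 = ∑ i, (M.mulVec e i) ^ 2 :=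
          Finset.sum_congr rfl fun i _ => by rw [hMe i]
      _ ≤ specNorm M ^ 2 := this
  -- chain for the sum
  have hsum : ∑ j' ∈ Finset.univ.erase j, (Sig j j') ^ 2 ≤ specNorm M ^ 2 := by
    have e1 : ∑ j' ∈ Finset.univ.erase j, (Sig j j') ^ 2
        = ∑ j' ∈ Finset.univ.erase j, (M j j') ^ 2 := by
      refine Finset.sum_congr rfl fun j' hj' => ?_
      have hne : j ≠ j' := (Finset.ne_of_mem_erase hj').symm
      have : M j j' = Sig j j' := by
        rw [hM, Matrix.sub_apply, hΨ, Matrix.diagonal_apply_ne _ hne, sub_zero]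
      rw [this]
    have e2 : ∑ j' ∈ Finset.univ.erase j, (M j j') ^ 2 ≤ ∑ j', (M j j') ^ 2 :=
      Finset.sum_le_sum_of_subset_of_nonneg (Finset.erase_subset _ _)
        fun i _ _ => sq_nonneg _
    have e3 : ∑ j', (M j j') ^ 2 = ∑ j', (M j' j) ^ 2 :=
      Finset.sum_congr rfl fun j' _ => by rw [hMsym j j']
    rw [e1]
    exact le_trans e2 (e3 ▸ hrow)
  -- conclude
  have hfinal : Real.sqrt (∑ j' ∈ Finset.univ.erase j, (Sig j j') ^ 2) ≤ specNorm M := by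
    calc Real.sqrt (∑ j' ∈ Finset.univ.erase j, (Sig j j') ^ 2)
        ≤ Real.sqrt (specNorm M ^ 2) := Real.sqrt_le_sqrt hsum
      _ = specNorm M := Real.sqrt_sq (specNorm_nonneg _)
  exact le_trans hfinal hMnorm
end

section
/- Let Φ ∈ R^{N×D} satisfy (d, δ)-RIP with 0 < δ < 1, and let S ⊆ {1,...,D} with |S| = d. Let β > 0, α̂_S a vector of positive reals, and Σ̂ = (β Φ_S^T Φ_S + diag{α̂_S})^{-1}. Then for each j ∈ S, sqrt((1/K) Σ_{j'∈S, j'≠j} Σ̂_{j,j'}^2) ≤ (1/√K) · δ/(β(1-δ)). -/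
set_option maxHeartbeats 1000000


open Matrix

private lemma sumSqNonneg {ι : Type*} [Fintype ι] (v : ι → ℝ) :
    0 ≤ ∑ i, v i ^ 2 :=
  Finset.sum_nonneg fun i _ => sq_nonneg _

/-- Polarization: a quadratic-form bound for a symmetric matrix gives a bilinear bound. -/
private lemma bilBound {ι : Type*} [Fintype ι] (E : Matrix ι ι ℝ) (δ : ℝ) (hδ : 0 ≤ δ)
    (hsym : ∀ x y : ι → ℝ, x ⬝ᵥ (E *ᵥ y) = y ⬝ᵥ (E *ᵥ x))
    (hquad : ∀ v : ι → ℝ, |v ⬝ᵥ (E *ᵥ v)| ≤ δ * ∑ i, v i ^ 2)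
    (a b : ι → ℝ) :
    |a ⬝ᵥ (E *ᵥ b)| ≤ δ * Real.sqrt (∑ i, a i ^ 2) * Real.sqrt (∑ i, b i ^ 2) := by
  have half : ∀ x y : ι → ℝ,
      |x ⬝ᵥ (E *ᵥ y)| ≤ δ / 2 * ((∑ i, x i ^ 2) + ∑ i, y i ^ 2) := by
    intro x y
    have e1 : (x + y) ⬝ᵥ (E *ᵥ (x + y)) =
        x ⬝ᵥ (E *ᵥ x) + 2 * (x ⬝ᵥ (E *ᵥ y)) + y ⬝ᵥ (E *ᵥ y) := by
      rw [mulVec_add, dotProduct_add, add_dotProduct, add_dotProduct, hsym y x]; ring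
    have e2 : (x - y) ⬝ᵥ (E *ᵥ (x - y)) =
        x ⬝ᵥ (E *ᵥ x) - 2 * (x ⬝ᵥ (E *ᵥ y)) + y ⬝ᵥ (E *ᵥ y) := by
      rw [mulVec_sub, dotProduct_sub, sub_dotProduct, sub_dotProduct, hsym y x]; ring
    have s1 : (∑ i, (x + y) i ^ 2) + ∑ i, (x - y) i ^ 2 =
        2 * (∑ i, x i ^ 2) + 2 * ∑ i, y i ^ 2 := by
      rw [← Finset.sum_add_distrib, Finset.mul_sum, Finset.mul_sum, ← Finset.sum_add_distrib]
      exact Finset.sum_congr rfl fun i _ => by simp only [Pi.add_apply, Pi.sub_apply]; ring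
    have q1 := hquad (x + y)
    have q2 := hquad (x - y)
    rw [abs_le] at q1 q2 ⊢
    constructor <;> nlinarith [q1.1, q1.2, q2.1, q2.2]
  by_cases ha : (∑ i, a i ^ 2) = 0
  · have ha0 : ∀ i, a i = 0 := by
      intro i
      have := (Finset.sum_eq_zero_iff_of_nonneg (fun i _ => sq_nonneg (a i))).1 ha i
        (Finset.mem_univ i)
      exact pow_eq_zero_iff two_ne_zero |>.1 this
    have hz : a ⬝ᵥ (E *ᵥ b) = 0 := by
      simp [dotProduct, ha0]
    rw [hz, ha]
    simp
  · by_cases hb : (∑ i, b i ^ 2) = 0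
    · have hb0 : ∀ i, b i = 0 := by
        intro i
        have := (Finset.sum_eq_zero_iff_of_nonneg (fun i _ => sq_nonneg (b i))).1 hb i
          (Finset.mem_univ i)
        exact pow_eq_zero_iff two_ne_zero |>.1 this
      have hz : a ⬝ᵥ (E *ᵥ b) = 0 := by
        have : b = 0 := funext hb0
        simp [this]
      rw [hz, hb]
      simp
    · have hA : 0 < ∑ i, a i ^ 2 := lt_of_le_of_ne (sumSqNonneg a) (Ne.symm ha)
      have hB : 0 < ∑ i, b i ^ 2 := lt_of_le_of_ne (sumSqNonneg b) (Ne.symm hb)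
      set sa := Real.sqrt (∑ i, a i ^ 2) with hsa_def
      set sb := Real.sqrt (∑ i, b i ^ 2) with hsb_def
      have hsa : 0 < sa := Real.sqrt_pos.2 hA
      have hsb : 0 < sb := Real.sqrt_pos.2 hB
      have hsa2 : sa ^ 2 = ∑ i, a i ^ 2 := Real.sq_sqrt (sumSqNonneg a)
      have hsb2 : sb ^ 2 = ∑ i, b i ^ 2 := Real.sq_sqrt (sumSqNonneg b)
      have key := half (sb • a) (sa • b)
      have hdp : (sb • a) ⬝ᵥ (E *ᵥ (sa • b)) = sb * sa * (a ⬝ᵥ (E *ᵥ b)) := by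
        rw [mulVec_smul, dotProduct_smul, smul_dotProduct]
        simp [smul_eq_mul]; ring
      have hsx : (∑ i, (sb • a) i ^ 2) = sb ^ 2 * ∑ i, a i ^ 2 := by
        rw [Finset.mul_sum]
        exact Finset.sum_congr rfl fun i _ => by simp [smul_eq_mul]; ring
      have hsy : (∑ i, (sa • b) i ^ 2) = sa ^ 2 * ∑ i, b i ^ 2 := by
        rw [Finset.mul_sum]
        exact Finset.sum_congr rfl fun i _ => by simp [smul_eq_mul]; ring
      rw [hdp, hsx, hsy, ← hsa2, ← hsb2, abs_mul, abs_mul, abs_of_pos hsb, abs_of_pos hsa] at key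
      nlinarith [mul_pos hsa hsb, abs_nonneg (a ⬝ᵥ (E *ᵥ b))]

/-- **Corollary 3: RIP bound on the limiting standard deviation of the diagonal
estimator.**  If `Φ` satisfies `(d, δ)`-RIP with `0 < δ < 1`, `S` has size `d`,
`β > 0`, `α̂` positive, and `Σ̂ = (β Φ_Sᵀ Φ_S + diag α̂)⁻¹`, then for each `j ∈ S`,
`√((1/K) ∑_{j'≠j} Σ̂_{j,j'}²) ≤ (1/√K) · δ / (β (1 - δ))`. -/
theorem rip_diag_estimator_std_bound {N D d : ℕ}
    (Φ : Matrix (Fin N) (Fin D) ℝ) (δ : ℝ) (hδ0 : 0 < δ) (hδ1 : δ < 1)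
    (hRIP : ∀ C : Finset (Fin D), C.card = d → ∀ v : C → ℝ,
      (1 - δ) * (∑ j, (v j) ^ 2) ≤
          ∑ i, ((Φ.submatrix id (Subtype.val : C → Fin D)).mulVec v i) ^ 2 ∧
      ∑ i, ((Φ.submatrix id (Subtype.val : C → Fin D)).mulVec v i) ^ 2 ≤
          (1 + δ) * (∑ j, (v j) ^ 2))
    (S : Finset (Fin D)) (hS : S.card = d)
    (β : ℝ) (hβ : 0 < β) (α : S → ℝ) (hα : ∀ j, 0 < α j)
    (K : ℕ) (hK : 0 < K)
    (Sig : Matrix S S ℝ)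
    (hSig : Sig = (β • ((Φ.submatrix id (Subtype.val : S → Fin D))ᵀ *
      (Φ.submatrix id (Subtype.val : S → Fin D))) + Matrix.diagonal α)⁻¹) :
    ∀ j : S,
      Real.sqrt ((1 / (K : ℝ)) * ∑ j' ∈ Finset.univ.erase j, (Sig j j') ^ 2) ≤
        (1 / Real.sqrt K) * (δ / (β * (1 - δ))) := by
  intro j
  set ΦS := Φ.submatrix id (Subtype.val : S → Fin D) with hΦS
  set M := ΦSᵀ * ΦS with hM
  set A := β • M + Matrix.diagonal α with hA
  set E := M - 1 with hE
  -- quadratic form of M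
  have hquadM : ∀ v : S → ℝ, v ⬝ᵥ (M *ᵥ v) = ∑ i, (ΦS *ᵥ v) i ^ 2 := by
    intro v
    rw [hM, ← mulVec_mulVec, dotProduct_mulVec, vecMul_transpose]
    simp [dotProduct, sq]
  -- RIP on S
  have hRS := hRIP S hS
  -- quadratic form bound on E
  have hEquad : ∀ v : S → ℝ, |v ⬝ᵥ (E *ᵥ v)| ≤ δ * ∑ i, v i ^ 2 := by
    intro v
    have hv : v ⬝ᵥ (E *ᵥ v) = (∑ i, (ΦS *ᵥ v) i ^ 2) - ∑ i, v i ^ 2 := by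
      rw [hE, sub_mulVec, dotProduct_sub, one_mulVec, hquadM]
      congr 1
      simp [dotProduct, sq]
    rw [hv, abs_le]
    have h1 := (hRS v).1
    have h2 := (hRS v).2
    constructor <;> nlinarith [h1, h2]
  -- symmetry of M and E
  have hMsym : Mᵀ = M := by rw [hM, transpose_mul, transpose_transpose]
  have hEsymM : Eᵀ = E := by rw [hE, transpose_sub, transpose_one, hMsym]
  have hsymE : ∀ x y : S → ℝ, x ⬝ᵥ (E *ᵥ y) = y ⬝ᵥ (E *ᵥ x) := by
    intro x y
    rw [dotProduct_mulVec, ← mulVec_transpose, hEsymM, dotProduct_comm]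
  have hAsym : Aᵀ = A := by
    rw [hA, transpose_add, transpose_smul, hMsym, diagonal_transpose]
  -- positive definiteness of A
  have hApd : A.PosDef := by
    rw [hA]
    refine Matrix.PosDef.posSemidef_add ?_ (Matrix.PosDef.diagonal hα)
    refine Matrix.PosSemidef.of_dotProduct_mulVec_nonneg ?_ (fun x => ?_)
    · show (β • M)ᴴ = β • M
      have : (β • M)ᴴ = (β • M)ᵀ := rfl
      rw [this, transpose_smul, hMsym]
    · have hx : star x = x := by
        funext i; simp
      rw [hx, smul_mulVec, dotProduct_smul, smul_eq_mul, hquadM]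
      exact mul_nonneg hβ.le (sumSqNonneg _)
  have hAdet : IsUnit A.det := isUnit_iff_ne_zero.2 hApd.det_pos.ne'
  have hSig' : Sig = A⁻¹ := by rw [hSig, hA, hM, hΦS]
  have hAS : A * Sig = 1 := by rw [hSig']; exact mul_nonsing_inv A hAdet
  -- symmetry of Sig
  have hSigSym : Sigᵀ = Sig := by
    rw [hSig', transpose_nonsing_inv, hAsym]
  -- the column u of Sig
  set u : S → ℝ := fun j' => Sig j' j with hu
  have hucol : u = Sig *ᵥ Pi.single j 1 := by
    funext i
    rw [mulVec_single]
    simp [hu]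
  have hAu : A *ᵥ u = Pi.single j 1 := by
    rw [hucol, mulVec_mulVec, hAS, one_mulVec]
  -- norm bound on u
  set U := ∑ j', u j' ^ 2 with hU
  set sU := Real.sqrt U with hsU
  have hUnn : 0 ≤ U := sumSqNonneg u
  have hsU2 : sU ^ 2 = U := Real.sq_sqrt hUnn
  have hsUnn : 0 ≤ sU := Real.sqrt_nonneg _
  have hdotAu : u ⬝ᵥ (A *ᵥ u) = u j := by
    rw [hAu, dotProduct_single, mul_one]
  have hlow : β * ((1 - δ) * U) ≤ u ⬝ᵥ (A *ᵥ u) := by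
    rw [hA, add_mulVec, dotProduct_add, smul_mulVec, dotProduct_smul, smul_eq_mul,
      hquadM]
    have h1 := (hRS u).1
    have h2 : 0 ≤ u ⬝ᵥ (Matrix.diagonal α *ᵥ u) := by
      rw [dotProduct, Finset.sum_congr rfl (fun i _ => by rw [mulVec_diagonal])]
      exact Finset.sum_nonneg fun i _ => by nlinarith [hα i, sq_nonneg (u i)]
    have := mul_le_mul_of_nonneg_left h1 hβ.le
    linarith
  have hujle : u j ≤ sU := by
    have h1 : u j ^ 2 ≤ U := Finset.single_le_sum (fun i _ => sq_nonneg (u i))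
      (Finset.mem_univ j)
    have h2 := Real.sqrt_le_sqrt h1
    rw [Real.sqrt_sq_eq_abs] at h2
    exact le_trans (le_abs_self _) (h2.trans_eq rfl)
  have hc : 0 < β * (1 - δ) := mul_pos hβ (by linarith)
  have hsUb : β * (1 - δ) * sU ≤ 1 := by
    rcases eq_or_lt_of_le hsUnn with h | h
    · rw [← h]; nlinarith
    · have : β * ((1 - δ) * U) ≤ sU := le_trans hlow (hdotAu ▸ hujle)
      nlinarith [hsU2]
  -- bound ‖E u‖ ≤ δ ‖u‖
  set w := E *ᵥ u with hw
  set W := ∑ i, w i ^ 2 with hW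
  set sW := Real.sqrt W with hsW
  have hWnn : 0 ≤ W := sumSqNonneg w
  have hsW2 : sW ^ 2 = W := Real.sq_sqrt hWnn
  have hsWnn : 0 ≤ sW := Real.sqrt_nonneg _
  have hbil := bilBound E δ hδ0.le hsymE hEquad w u
  have hww : w ⬝ᵥ (E *ᵥ u) = W := by
    rw [← hw, hW, dotProduct]
    exact Finset.sum_congr rfl fun i _ => (sq (w i)).symm ▸ (pow_two (w i)).symm ▸ rfl
  have hWle : W ≤ δ ^ 2 * U := by
    rw [hww, ← hsU, ← hsW] at hbil
    have habs : W ≤ δ * sW * sU := le_trans (le_abs_self _) hbil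
    rcases eq_or_lt_of_le hsWnn with h | h
    · nlinarith
    · have hsWle : sW ≤ δ * sU := by nlinarith
      nlinarith
  -- off-diagonal entries
  have hoff : ∀ j' : S, j' ≠ j → u j' ^ 2 ≤ w j' ^ 2 := by
    intro j' hne
    have h0 : (A *ᵥ u) j' = 0 := by rw [hAu]; exact Pi.single_eq_of_ne hne 1
    have hexp : (A *ᵥ u) j' = β * (w j' + u j') + α j' * u j' := by
      rw [hA, add_mulVec, Pi.add_apply, smul_mulVec, Pi.smul_apply, smul_eq_mul,
        mulVec_diagonal]
      have : (M *ᵥ u) j' = w j' + u j' := by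
        rw [hw, hE, sub_mulVec, one_mulVec, Pi.sub_apply]
        ring
      rw [this]
    rw [hexp] at h0
    have hαj := hα j'
    have hba : 0 < β + α j' := by linarith
    have hlin : (β + α j') * u j' = -(β * w j') := by linarith
    have hsq : ((β + α j') * u j') ^ 2 = (β * w j') ^ 2 := by rw [hlin]; ring
    have h2 : u j' ^ 2 * (β + α j') ^ 2 ≤ w j' ^ 2 * (β + α j') ^ 2 := by
      have e : u j' ^ 2 * (β + α j') ^ 2 = w j' ^ 2 * β ^ 2 := by linear_combination hsq
      rw [e]
      have hnn : 0 ≤ w j' ^ 2 * (α j' ^ 2 + 2 * α j' * β) :=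
        mul_nonneg (sq_nonneg _) (by positivity)
      nlinarith [hnn]
    exact le_of_mul_le_mul_right h2 (by positivity)
  -- sum over the erased set
  have hT : (∑ j' ∈ Finset.univ.erase j, (Sig j j') ^ 2) ≤ δ ^ 2 * U := by
    have h1 : (∑ j' ∈ Finset.univ.erase j, (Sig j j') ^ 2) =
        ∑ j' ∈ Finset.univ.erase j, u j' ^ 2 := by
      refine Finset.sum_congr rfl fun j' _ => ?_
      have : Sig j j' = Sig j' j := by
        conv_lhs => rw [← hSigSym]
        rfl
      rw [this, hu]
    rw [h1]
    calc (∑ j' ∈ Finset.univ.erase j, u j' ^ 2)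
        ≤ ∑ j' ∈ Finset.univ.erase j, w j' ^ 2 :=
          Finset.sum_le_sum fun j' hj' => hoff j' (Finset.ne_of_mem_erase hj')
      _ ≤ W := Finset.sum_le_sum_of_subset_of_nonneg (Finset.erase_subset _ _)
          (fun i _ _ => sq_nonneg _)
      _ ≤ δ ^ 2 * U := hWle
  -- conclude
  have hTfin : (∑ j' ∈ Finset.univ.erase j, (Sig j j') ^ 2) ≤ (δ / (β * (1 - δ))) ^ 2 := by
    have hU' : U ≤ (1 / (β * (1 - δ))) ^ 2 := by
      rw [← hsU2]
      have : sU ≤ 1 / (β * (1 - δ)) := by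
        rw [le_div_iff₀ hc]; linarith [hsUb]
      nlinarith
    calc (∑ j' ∈ Finset.univ.erase j, (Sig j j') ^ 2) ≤ δ ^ 2 * U := hT
      _ ≤ δ ^ 2 * (1 / (β * (1 - δ))) ^ 2 := by nlinarith
      _ = (δ / (β * (1 - δ))) ^ 2 := by field_simp
  have hKpos : (0 : ℝ) < K := Nat.cast_pos.2 hK
  rw [Real.sqrt_mul (by positivity)]
  have h1 : Real.sqrt (1 / (K : ℝ)) = 1 / Real.sqrt K := by
    rw [one_div, Real.sqrt_inv, one_div]
  rw [h1]
  have h2 : Real.sqrt (∑ j' ∈ Finset.univ.erase j, (Sig j j') ^ 2) ≤ δ / (β * (1 - δ)) := by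
    have := Real.sqrt_le_sqrt hTfin
    rwa [Real.sqrt_sq (by positivity)] at this
  exact mul_le_mul_of_nonneg_left h2 (by positivity)
end

section
/- Let Φ ∈ R^{N×D} satisfy (d, δ)-RIP with 0 < δ < 1, S a size-d index set, β > 0, α̂_S positive. Define A = β Φ_S^T Φ_S + diag{α̂_S} and the preconditioner M = diag{β·1 + α̂_S} (i.e., θ_j = 1). Then the preconditioned matrix A' = M^{-1/2} A M^{-1/2} satisfies κ(A') ≤ (1+δ)/(1-δ), and consequently 2((√κ(A')-1)/(√κ(A')+1))^U ≤ 2 exp(-U √((1-δ)/(1+δ))) for any U ∈ N. -/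
open Matrix

/-- **Corollary 4: RIP bound on the preconditioned condition number and the induced CG
rate.**  If `Φ` satisfies `(d, δ)`-RIP with `0 < δ < 1`, `S` has size `d`, and
`A = β Φ_Sᵀ Φ_S + diag α̂` is preconditioned with `M = diag (β + α̂)` (i.e. `θ_j = 1`),
then the condition number of `A' = M^{-1/2} A M^{-1/2}` is at most `(1+δ)/(1-δ)`
(the ratio of any two eigenvalues of `A'` is at most this), and consequently for any `κ`
with `1 ≤ κ ≤ (1+δ)/(1-δ)` and any `U : ℕ`,
`2 ((√κ - 1)/(√κ + 1))^U ≤ 2 exp (-U √((1-δ)/(1+δ)))`. -/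
theorem rip_preconditioned_cg_rate {N D d : ℕ}
    (Φ : Matrix (Fin N) (Fin D) ℝ) (δ : ℝ) (hδ0 : 0 < δ) (hδ1 : δ < 1)
    (hRIP : ∀ C : Finset (Fin D), C.card = d → ∀ v : C → ℝ,
      (1 - δ) * (∑ j, (v j) ^ 2) ≤
          ∑ i, ((Φ.submatrix id (Subtype.val : C → Fin D)).mulVec v i) ^ 2 ∧
      ∑ i, ((Φ.submatrix id (Subtype.val : C → Fin D)).mulVec v i) ^ 2 ≤
          (1 + δ) * (∑ j, (v j) ^ 2))
    (S : Finset (Fin D)) (hS : S.card = d)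
    (β : ℝ) (hβ : 0 < β) (α : S → ℝ) (hα : ∀ j, 0 < α j)
    (A : Matrix S S ℝ)
    (hA : A = β • ((Φ.submatrix id (Subtype.val : S → Fin D))ᵀ *
      (Φ.submatrix id (Subtype.val : S → Fin D))) + Matrix.diagonal α)
    (A' : Matrix S S ℝ)
    (hA' : A' = Matrix.diagonal (fun j => (Real.sqrt (β + α j))⁻¹) * A *
      Matrix.diagonal (fun j => (Real.sqrt (β + α j))⁻¹)) :
    (∀ (η₁ η₂ : ℝ) (v₁ v₂ : S → ℝ), v₁ ≠ 0 → v₂ ≠ 0 →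
      A'.mulVec v₁ = η₁ • v₁ → A'.mulVec v₂ = η₂ • v₂ →
      η₁ / η₂ ≤ (1 + δ) / (1 - δ)) ∧
    (∀ κ : ℝ, 1 ≤ κ → κ ≤ (1 + δ) / (1 - δ) → ∀ U : ℕ,
      2 * ((Real.sqrt κ - 1) / (Real.sqrt κ + 1)) ^ U ≤
        2 * Real.exp (-(U : ℝ) * Real.sqrt ((1 - δ) / (1 + δ)))) := by
  have key : ∀ (η : ℝ) (v : S → ℝ), v ≠ 0 →
      A'.mulVec v = η • v → (1 - δ) ≤ η ∧ η ≤ 1 + δ := by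
    intro η v hv heig
    set ΦS := Φ.submatrix id (Subtype.val : S → Fin D) with hΦS
    set c : S → ℝ := fun j => (Real.sqrt (β + α j))⁻¹ with hc
    set w : S → ℝ := fun j => c j * v j with hw
    have hβα : ∀ j : S, (0:ℝ) < β + α j := fun j => add_pos hβ (hα j)
    have hsqrtpos : ∀ j : S, 0 < Real.sqrt (β + α j) :=
      fun j => Real.sqrt_pos.mpr (hβα j)
    have hDv : (Matrix.diagonal c) *ᵥ v = w := by
      funext j; rw [mulVec_diagonal]
    have hQ1 : v ⬝ᵥ (A'.mulVec v) = w ⬝ᵥ (A.mulVec w) := by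
      rw [hA', ← mulVec_mulVec, ← mulVec_mulVec, hDv]
      rw [dotProduct_mulVec v (Matrix.diagonal c)]
      congr 1
      funext j
      rw [vecMul_diagonal, mul_comm]
    have hQ2 : w ⬝ᵥ (A.mulVec w) =
        β * ((ΦS *ᵥ w) ⬝ᵥ (ΦS *ᵥ w)) + ∑ j, α j * (w j)^2 := by
      rw [hA, add_mulVec, dotProduct_add, smul_mulVec, dotProduct_smul]
      congr 1
      · rw [← mulVec_mulVec, dotProduct_mulVec w ΦSᵀ, vecMul_transpose]
        rfl
      · simp only [dotProduct]
        congr 1; funext j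
        rw [mulVec_diagonal]; ring
    have hnorm : ∀ u : S → ℝ, u ⬝ᵥ u = ∑ j, (u j)^2 := by
      intro u; simp [dotProduct, sq]
    have hnormN : ∀ u : Fin N → ℝ, u ⬝ᵥ u = ∑ i, (u i)^2 := by
      intro u; simp [dotProduct, sq]
    have hRIPw := hRIP S hS w
    have hv2 : ∀ j : S, (v j)^2 = (β + α j) * (w j)^2 := by
      intro j
      have hvj : v j = Real.sqrt (β + α j) * w j := by
        show v j = Real.sqrt (β + α j) * ((Real.sqrt (β + α j))⁻¹ * v j)
        rw [mul_inv_cancel_left₀ (hsqrtpos j).ne']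
      rw [hvj, mul_pow, Real.sq_sqrt (hβα j).le]
    have hvv : v ⬝ᵥ v = ∑ j, (β + α j) * (w j)^2 := by
      rw [hnorm]; exact Finset.sum_congr rfl (fun j _ => hv2 j)
    have hQη : v ⬝ᵥ (A'.mulVec v) = η * (v ⬝ᵥ v) := by
      rw [heig, dotProduct_smul]; rfl
    have hvpos : 0 < v ⬝ᵥ v := by
      rw [hnorm]
      obtain ⟨j, hj⟩ := Function.ne_iff.mp hv
      exact Finset.sum_pos' (fun i _ => sq_nonneg _)
        ⟨j, Finset.mem_univ j,
          lt_of_le_of_ne (sq_nonneg _) (Ne.symm (pow_ne_zero 2 hj))⟩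
    have h1 : (1 - δ) * ∑ j, (w j)^2 ≤ (ΦS *ᵥ w) ⬝ᵥ (ΦS *ᵥ w) := by
      rw [hnormN]; exact hRIPw.1
    have h1' : (ΦS *ᵥ w) ⬝ᵥ (ΦS *ᵥ w) ≤ (1 + δ) * ∑ j, (w j)^2 := by
      rw [hnormN]; exact hRIPw.2
    have hlow : (1 - δ) * (v ⬝ᵥ v) ≤ η * (v ⬝ᵥ v) := by
      rw [← hQη, hQ1, hQ2, hvv]
      have h2 : (1 - δ) * ∑ j, (β + α j) * (w j)^2 ≤
          β * ((1 - δ) * ∑ j, (w j)^2) + ∑ j, α j * (w j)^2 := by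
        calc (1 - δ) * ∑ j, (β + α j) * (w j)^2
            = ∑ j, (1 - δ) * ((β + α j) * (w j)^2) := by rw [Finset.mul_sum]
          _ ≤ ∑ j, (β * ((1 - δ) * (w j)^2) + α j * (w j)^2) :=
              Finset.sum_le_sum (fun j _ => by nlinarith [mul_nonneg (mul_nonneg hδ0.le (hα j).le) (sq_nonneg (w j))])
          _ = β * ((1 - δ) * ∑ j, (w j)^2) + ∑ j, α j * (w j)^2 := by
              simp only [Finset.mul_sum, Finset.sum_add_distrib]
      calc (1 - δ) * ∑ j, (β + α j) * (w j)^2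
          ≤ β * ((1 - δ) * ∑ j, (w j)^2) + ∑ j, α j * (w j)^2 := h2
        _ ≤ β * ((ΦS *ᵥ w) ⬝ᵥ (ΦS *ᵥ w)) + ∑ j, α j * (w j)^2 := by
            have := mul_le_mul_of_nonneg_left h1 hβ.le
            linarith
    have hhigh : η * (v ⬝ᵥ v) ≤ (1 + δ) * (v ⬝ᵥ v) := by
      rw [← hQη, hQ1, hQ2, hvv]
      have h2 : β * ((1 + δ) * ∑ j, (w j)^2) + ∑ j, α j * (w j)^2 ≤
          (1 + δ) * ∑ j, (β + α j) * (w j)^2 := by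
        calc β * ((1 + δ) * ∑ j, (w j)^2) + ∑ j, α j * (w j)^2
            = ∑ j, (β * ((1 + δ) * (w j)^2) + α j * (w j)^2) := by
              simp only [Finset.mul_sum, Finset.sum_add_distrib]
          _ ≤ ∑ j, (1 + δ) * ((β + α j) * (w j)^2) :=
              Finset.sum_le_sum (fun j _ => by nlinarith [mul_nonneg (mul_nonneg hδ0.le (hα j).le) (sq_nonneg (w j))])
          _ = (1 + δ) * ∑ j, (β + α j) * (w j)^2 := by rw [Finset.mul_sum]
      calc β * ((ΦS *ᵥ w) ⬝ᵥ (ΦS *ᵥ w)) + ∑ j, α j * (w j)^2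
          ≤ β * ((1 + δ) * ∑ j, (w j)^2) + ∑ j, α j * (w j)^2 := by
            have := mul_le_mul_of_nonneg_left h1' hβ.le
            linarith
        _ ≤ (1 + δ) * ∑ j, (β + α j) * (w j)^2 := h2
    exact ⟨le_of_mul_le_mul_right (by linarith) hvpos,
           le_of_mul_le_mul_right (by linarith) hvpos⟩
  constructor
  · intro η₁ η₂ v₁ v₂ hv₁ hv₂ he₁ he₂
    obtain ⟨_, h₁u⟩ := key η₁ v₁ hv₁ he₁
    obtain ⟨h₂l, _⟩ := key η₂ v₂ hv₂ he₂
    have h1δ : (0:ℝ) < 1 - δ := by linarith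
    exact div_le_div₀ (by linarith) h₁u h1δ h₂l
  ·
    intro κ hκ1 hκ2 U
    have h1δ : (0:ℝ) < 1 - δ := by linarith
    have h1δ' : (0:ℝ) < 1 + δ := by linarith
    set s := Real.sqrt κ with hs
    set t := Real.sqrt ((1 - δ) / (1 + δ)) with ht
    have hs1 : 1 ≤ s := by
      rw [hs, show (1:ℝ) = Real.sqrt 1 by simp]
      exact Real.sqrt_le_sqrt hκ1
    have ht0 : 0 < t := Real.sqrt_pos.mpr (by positivity)
    have ht1 : t ≤ 1 := by
      rw [ht]
      calc Real.sqrt ((1 - δ) / (1 + δ)) ≤ Real.sqrt 1 :=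
          Real.sqrt_le_sqrt (by rw [div_le_one h1δ']; linarith)
        _ = 1 := Real.sqrt_one
    have hst : s * t ≤ 1 := by
      have : s ≤ Real.sqrt ((1 + δ) / (1 - δ)) := Real.sqrt_le_sqrt hκ2
      have hmul : s * t ≤ Real.sqrt ((1 + δ) / (1 - δ)) * t :=
        mul_le_mul_of_nonneg_right this ht0.le
      calc s * t ≤ Real.sqrt ((1 + δ) / (1 - δ)) * t := hmul
        _ = Real.sqrt (((1 + δ) / (1 - δ)) * ((1 - δ) / (1 + δ))) := by
            rw [ht, Real.sqrt_mul (by positivity)]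
        _ = 1 := by rw [div_mul_div_comm, mul_comm]; simp [ne_of_gt h1δ, ne_of_gt h1δ', div_self, mul_pos h1δ h1δ']
    have hsp : (0:ℝ) < s + 1 := by linarith
    have hr0 : 0 ≤ (s - 1) / (s + 1) := div_nonneg (by linarith) hsp.le
    have hkey : (s - 1) / (s + 1) ≤ Real.exp (-t) := by
      have h2 : t * (s + 1) ≤ 2 := by nlinarith
      have h3 : (s - 1) / (s + 1) = 1 - 2 / (s + 1) := by field_simp; ring
      have h4 : t ≤ 2 / (s + 1) := by rw [le_div_iff₀ hsp]; linarith
      have h5 : 1 - t ≤ Real.exp (-t) := by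
        have := Real.add_one_le_exp (-t); linarith
      calc (s - 1) / (s + 1) = 1 - 2 / (s + 1) := h3
        _ ≤ 1 - t := by linarith
        _ ≤ Real.exp (-t) := h5
    have : ((s - 1) / (s + 1)) ^ U ≤ Real.exp (-t) ^ U := pow_le_pow_left₀ hr0 hkey U
    rw [← Real.exp_nat_mul] at this
    have heq : (U:ℝ) * (-t) = -(U:ℝ) * t := by ring
    rw [heq] at this
    linarith
end
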